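/- Let → be a D-implication on a lattice L. For each a ∈ L, define z^a := z → a for z ≥ a. Then for all a ≤ b ≤ c in L: (1) a ≤ b^a; (2) c ∧ (b ∨ c^a) = b (so each principal filter [a) with operation ^a is a dually weakly orthomodular sublattice); (3) the compatibility condition c^a ∨ b = c^b holds. -/
import Mathlib

/-- A D-implication induces a family of compatible dually weakly orthomodular sublattices on
principal filters, via z^a := z → a. -/
theorem stmt_8 {L : Type*} [Lattice L] (impl : L → L → L)
    (h1 : ∀ x y : L, impl (x ⊔ y) x = impl y x)
    (h2 : ∀ x y z : L, x ⊔ y ⊔ impl (x ⊔ z) y = impl z (x ⊔ y))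
    (h3 : ∀ x y : L, (x ⊔ y) ⊓ impl x y = y) :
    ∀ a b c : L, a ≤ b → b ≤ c →
      a ≤ impl b a ∧ c ⊓ (b ⊔ impl c a) = b ∧ impl c a ⊔ b = impl c b := by
  intro a b c hab hbc
  have key : impl c a ⊔ b = impl c b := by
    have := h2 b a c
    rw [sup_eq_left.mpr hab, sup_eq_right.mpr hbc] at this
    rw [← this, sup_comm]
  refine ⟨?_, ?_, key⟩
  · have := h3 b a
    calc a = (b ⊔ a) ⊓ impl b a := (h3 b a).symm
      _ ≤ impl b a := inf_le_right
  · have h := h3 c b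
    rw [sup_eq_left.mpr hbc] at h
    rw [sup_comm, key, h]
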